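/- Let G be a path graph. Then for every vertex v of G, the subgraph induced by the neighborhood N(v) is an interval graph. -/

import Mathlib

open SimpleGraph

variable {V : Type*}

/-- `S` separates `u` and `w` in `G`: every walk from `u` to `w` meets `S`. -/
def Separates (G : SimpleGraph V) (S : Set V) (u w : V) : Prop :=
  ∀ p : G.Walk u w, ∃ x ∈ p.support, x ∈ S

/-- `S` is a minimal `{u,w}`-separator. -/
def IsMinUWSeparator (G : SimpleGraph V) (S : Set V) (u w : V) : Prop :=
  u ≠ w ∧ ¬ G.Adj u w ∧ u ∉ S ∧ w ∉ S ∧ Separates G S u w ∧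
    ∀ S' ⊂ S, ¬ Separates G S' u w

/-- `S` is a minimal separator of `G`. -/
def IsMinSeparator (G : SimpleGraph V) (S : Set V) : Prop :=
  ∃ u w : V, IsMinUWSeparator G S u w

/-- A vertex is simplicial if its neighborhood is a clique. -/
def IsSimplicial (G : SimpleGraph V) (v : V) : Prop :=
  G.IsClique (G.neighborSet v)

/-- A maximal clique (as a vertex set). -/
def IsMaxClique (G : SimpleGraph V) (s : Set V) : Prop :=
  G.IsClique s ∧ ∀ t : Set V, G.IsClique t → s ⊆ t → s = t

/-- A graph is chordal if it has no induced cycle of length at least 4. -/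
def Chordal (G : SimpleGraph V) : Prop :=
  ∀ n : ℕ, 4 ≤ n → IsEmpty (SimpleGraph.cycleGraph n ↪g G)

/-- The type of maximal cliques of `G`. -/
abbrev MaxCliques (G : SimpleGraph V) := {s : Set V // IsMaxClique G s}

/-- `T` is a clique tree of `G`: a tree on the maximal cliques such that for each vertex
the cliques containing it induce a connected subgraph. -/
def IsCliqueTree (G : SimpleGraph V) (T : SimpleGraph (MaxCliques G)) : Prop :=
  T.IsTree ∧ ∀ v : V, (T.induce {Q : MaxCliques G | v ∈ Q.1}).Connected

/-- The set `X` induces a path in `T` (assuming `T` is a tree: connected with max degree 2). -/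
def InducesPath {α : Type*} (T : SimpleGraph α) (X : Set α) : Prop :=
  (T.induce X).Connected ∧ ∀ x : X, ((T.induce X).neighborSet x).ncard ≤ 2

/-- `T` is a clique path tree of `G`. -/
def IsCliquePathTree (G : SimpleGraph V) (T : SimpleGraph (MaxCliques G)) : Prop :=
  T.IsTree ∧ ∀ v : V, InducesPath T {Q : MaxCliques G | v ∈ Q.1}

/-- `G` is a path graph: the empty graph, or a graph admitting a clique path tree. -/
def IsPathGraph (G : SimpleGraph V) : Prop :=
  IsEmpty V ∨ ∃ T : SimpleGraph (MaxCliques G), IsCliquePathTree G T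

/-- `G` is an interval graph: intersection graph of closed real intervals. -/
def IsIntervalGraph (G : SimpleGraph V) : Prop :=
  ∃ f : V → Set ℝ, (∀ v, ∃ a b : ℝ, a ≤ b ∧ f v = Set.Icc a b) ∧
    ∀ u v : V, u ≠ v → (G.Adj u v ↔ (f u ∩ f v).Nonempty)

/-- `a` is a middle of `b, c`: every walk from `b` to `c` meets `N(a)`. -/
def IsMiddle (G : SimpleGraph V) (a b c : V) : Prop :=
  ∀ p : G.Walk b c, ∃ x ∈ p.support, G.Adj a x

/-- `a, b, c` form an asteroidal triple. -/
def AsteroidalTriple (G : SimpleGraph V) (a b c : V) : Prop :=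
  a ≠ b ∧ a ≠ c ∧ b ≠ c ∧ ¬ G.Adj a b ∧ ¬ G.Adj a c ∧ ¬ G.Adj b c ∧
  (∃ p : G.Walk b c, ∀ x ∈ p.support, ¬ G.Adj a x) ∧
  (∃ p : G.Walk a c, ∀ x ∈ p.support, ¬ G.Adj b x) ∧
  (∃ p : G.Walk a b, ∀ x ∈ p.support, ¬ G.Adj c x)

/-- The closed neighborhood clique `Q_v` of a simplicial vertex. -/
def Qv (G : SimpleGraph V) (v : V) : Set V := insert v (G.neighborSet v)

/-- `S_v`: the vertices of `Q_v` having a neighbor outside `Q_v`. -/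
def Sv (G : SimpleGraph V) (v : V) : Set V :=
  {x | x ∈ Qv G v ∧ ∃ y, y ∉ Qv G v ∧ G.Adj x y}

/-- A simplicial vertex is special if `S_v` is an inclusion-maximal minimal separator. -/
def IsSpecial (G : SimpleGraph V) (v : V) : Prop :=
  IsSimplicial G v ∧ IsMinSeparator G (Sv G v) ∧
    ∀ S : Set V, IsMinSeparator G S → Sv G v ⊆ S → S = Sv G v

/-- Connected components of `G ∖ S` containing a vertex complete to `S`. -/
def CompleteComponents (G : SimpleGraph V) (S : Set V) :
    Set ((G.induce (Sᶜ : Set V)).ConnectedComponent) :=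
  {C | ∃ x : (Sᶜ : Set V), (G.induce (Sᶜ : Set V)).connectedComponentMk x = C ∧
        S ⊆ G.neighborSet x.1}

/-- The wheel graph: an `n`-cycle plus a universal vertex (`none`). -/
def wheelGraph (n : ℕ) : SimpleGraph (Option (Fin n)) :=
  SimpleGraph.fromRel (fun a b =>
    (∃ i j : Fin n, a = some i ∧ b = some j ∧ (SimpleGraph.cycleGraph n).Adj i j) ∨
    (a = none ∧ b ≠ none))

/-- `y` lies on the tree-path between `x` and `z` in `T`. -/
def OnTreePath {α : Type*} (T : SimpleGraph α) (x y z : α) : Prop :=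
  ∃ p : T.Walk x z, p.IsPath ∧ y ∈ p.support


section Helpers
set_option linter.unusedSectionVars false
set_option linter.unusedVariables false
variable {α : Type*} [DecidableEq α] {H : SimpleGraph α}


variable {α : Type*} [DecidableEq α] {H : SimpleGraph α}

/-- In an acyclic connected graph, adjacent vertices have different distances from any vertex. -/
lemma adj_dist_ne (hc : H.Connected) (ha : H.IsAcyclic) (e : α) {x y : α}
    (hxy : H.Adj x y) : H.dist e x ≠ H.dist e y := by
  intro heq
  obtain ⟨p, hp, hpl⟩ := (hc.preconnected e x).exists_path_of_dist
  obtain ⟨q, hq, hql⟩ := (hc.preconnected e y).exists_path_of_dist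
  -- x ∉ q.support
  have hxq : x ∉ q.support := by
    intro hxs
    have h1 : H.dist e x ≤ (q.takeUntil x hxs).length := dist_le _
    have h2 := q.length_takeUntil_le hxs
    -- suffix from x to y has positive length since x ≠ y
    have hxyne : x ≠ y := hxy.ne
    have hspec := q.take_spec hxs
    have hL : (q.takeUntil x hxs).length + (q.dropUntil x hxs).length = q.length := by
      conv_rhs => rw [← hspec]
      exact (SimpleGraph.Walk.length_append _ _).symm
    have hd : (q.dropUntil x hxs).length ≠ 0 := fun h0 =>
      hxyne (SimpleGraph.Walk.eq_of_length_eq_zero h0)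
    omega
  -- two distinct paths from x to e
  have hp1 : (SimpleGraph.Walk.cons hxy q.reverse).IsPath := by
    rw [SimpleGraph.Walk.cons_isPath_iff]
    exact ⟨hq.reverse, by simpa [SimpleGraph.Walk.support_reverse] using hxq⟩
  have hp2 : p.reverse.IsPath := hp.reverse
  have := SimpleGraph.isAcyclic_iff_path_unique.mp ha
    ⟨SimpleGraph.Walk.cons hxy q.reverse, hp1⟩ ⟨p.reverse, hp2⟩
  have hlen := congrArg (fun (r : H.Path x e) => r.1.length) this
  simp [SimpleGraph.Walk.length_reverse, hpl, hql, heq] at hlen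

lemma adj_dist_le (hc : H.Connected) (e : α) {x y : α} (hxy : H.Adj x y) :
    H.dist e y ≤ H.dist e x + 1 := by
  have h1 : H.dist x y ≤ 1 := by
    have := SimpleGraph.dist_le (SimpleGraph.Walk.cons hxy SimpleGraph.Walk.nil)
    simpa using this
  have := hc.dist_triangle (u := e) (v := x) (w := y)
  omega

lemma adj_dist_step (hc : H.Connected) (ha : H.IsAcyclic) (e : α) {x y : α}
    (hxy : H.Adj x y) :
    H.dist e y = H.dist e x + 1 ∨ H.dist e x = H.dist e y + 1 := by
  have h1 := adj_dist_le hc e hxy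
  have h2 := adj_dist_le hc e hxy.symm
  have h3 := adj_dist_ne hc ha e hxy
  omega

lemma dist_eq_zero' (hc : H.Connected) {e x : α} (h : H.dist e x = 0) : e = x := by
  obtain ⟨p, _, hpl⟩ := (hc.preconnected e x).exists_path_of_dist
  exact SimpleGraph.Walk.eq_of_length_eq_zero (by rw [hpl, h])

/-- key: distinct neighbors of x with e-avoiding... if y₁ y₂ are neighbors of x both at
distance d-1 from e where d = dist e x, then y₁ = y₂. -/
lemma neighbors_dist_lt_eq (hc : H.Connected) (ha : H.IsAcyclic) (e : α) {x y₁ y₂ : α}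
    (h1 : H.Adj x y₁) (h2 : H.Adj x y₂)
    (hd1 : H.dist e y₁ < H.dist e x) (hd2 : H.dist e y₂ < H.dist e x) : y₁ = y₂ := by
  obtain ⟨q1, hq1, hq1l⟩ := (hc.preconnected e y₁).exists_path_of_dist
  obtain ⟨q2, hq2, hq2l⟩ := (hc.preconnected e y₂).exists_path_of_dist
  have hx1 : x ∉ q1.support := fun hxs => by
    have := SimpleGraph.dist_le (q1.takeUntil x hxs)
    have := q1.length_takeUntil_le hxs
    omega
  have hx2 : x ∉ q2.support := fun hxs => by
    have := SimpleGraph.dist_le (q2.takeUntil x hxs)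
    have := q2.length_takeUntil_le hxs
    omega
  have hp1 : (SimpleGraph.Walk.cons h1 q1.reverse).IsPath := by
    rw [SimpleGraph.Walk.cons_isPath_iff]
    exact ⟨hq1.reverse, by simpa [SimpleGraph.Walk.support_reverse] using hx1⟩
  have hp2 : (SimpleGraph.Walk.cons h2 q2.reverse).IsPath := by
    rw [SimpleGraph.Walk.cons_isPath_iff]
    exact ⟨hq2.reverse, by simpa [SimpleGraph.Walk.support_reverse] using hx2⟩
  have heq := SimpleGraph.isAcyclic_iff_path_unique.mp ha
    ⟨SimpleGraph.Walk.cons h1 q1.reverse, hp1⟩ ⟨SimpleGraph.Walk.cons h2 q2.reverse, hp2⟩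
  have := congrArg (fun (r : H.Path x e) => r.1.getVert 1) heq
  simpa [SimpleGraph.Walk.getVert_cons_succ, SimpleGraph.Walk.getVert_zero] using this

/-- A finite nonempty connected acyclic graph has a vertex of degree ≤ 1. -/
lemma exists_leaf [Fintype α] [Nonempty α] (hc : H.Connected) (ha : H.IsAcyclic) :
    ∃ e : α, (H.neighborSet e).ncard ≤ 1 := by
  classical
  obtain ⟨e0⟩ := ‹Nonempty α›
  obtain ⟨x, -, hx⟩ := Finset.exists_max_image Finset.univ (fun z => H.dist e0 z)
    ⟨e0, Finset.mem_univ e0⟩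
  refine ⟨x, ?_⟩
  by_contra hcon
  push_neg at hcon
  obtain ⟨y1, y2, hy1, hy2, hne⟩ := (Set.one_lt_ncard_iff (Set.toFinite _)).mp hcon
  have key : ∀ y ∈ H.neighborSet x, H.dist e0 y < H.dist e0 x := by
    intro y hy
    rcases adj_dist_step hc ha e0 hy with h | h
    · exact absurd (hx y (Finset.mem_univ y)) (by omega)
    · omega
  exact hne (neighbors_dist_lt_eq hc ha e0 hy1 hy2 (key y1 hy1) (key y2 hy2))

/-- extraction: if dist e x = k+1 then x has a neighbor at distance k. -/
lemma exists_nbr_dist_pred (hc : H.Connected) {e x : α} {k : ℕ} (h : H.dist e x = k + 1) :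
    ∃ a, H.Adj x a ∧ H.dist e a = k := by
  obtain ⟨p, hp, hpl⟩ := (hc.preconnected e x).exists_path_of_dist
  have hne : x ≠ e := fun hxe => by
    subst hxe; rw [SimpleGraph.dist_self] at h; omega
  obtain ⟨a, hadj, q, hq⟩ := SimpleGraph.Walk.exists_eq_cons_of_ne hne p.reverse
  have hql : q.length = k := by
    have := congrArg SimpleGraph.Walk.length hq
    simp [SimpleGraph.Walk.length_reverse, hpl, h] at this
    omega
  have hle : H.dist e a ≤ k := by
    have := SimpleGraph.dist_le q.reverse
    simpa [SimpleGraph.Walk.length_reverse, hql] using this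
  have hge : k ≤ H.dist e a := by
    have htri := hc.dist_triangle (u := e) (v := a) (w := x)
    have := adj_dist_le hc e hadj  -- dist e a ≤ dist e x + 1; wrong direction
    have h2 : H.dist e x ≤ H.dist e a + 1 := adj_dist_le hc e hadj.symm
    omega
  exact ⟨a, hadj, le_antisymm hle hge⟩

/-- Injectivity of distance from a leaf in a tree with max degree 2. -/
lemma dist_from_leaf_inj [Fintype α] (hc : H.Connected) (ha : H.IsAcyclic)
    (hdeg : ∀ z : α, (H.neighborSet z).ncard ≤ 2)
    {e : α} (he : (H.neighborSet e).ncard ≤ 1) :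
    ∀ k : ℕ, ∀ x y : α, H.dist e x = k → H.dist e y = k → x = y := by
  intro k
  induction k with
  | zero => intro x y hx hy
            exact (dist_eq_zero' hc hx).symm.trans (dist_eq_zero' hc hy)
  | succ k ih =>
    intro x y hx hy
    by_contra hne
    obtain ⟨a, hax, hak⟩ := exists_nbr_dist_pred hc hx
    obtain ⟨b, hby, hbk⟩ := exists_nbr_dist_pred hc hy
    have hab : a = b := ih a b hak hbk
    subst hab
    -- x and y are distinct neighbors of a
    have hxmem : x ∈ H.neighborSet a := hax.symm
    have hymem : y ∈ H.neighborSet a := hby.symm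
    rcases Nat.eq_zero_or_pos k with hk0 | hkpos
    · -- a = e, leaf
      have hae : e = a := dist_eq_zero' hc (by omega)
      have : ({x, y} : Set α) ⊆ H.neighborSet e := by
        rw [hae]; intro z hz
        rcases hz with hz | hz
        · subst hz; exact hxmem
        · simp at hz; subst hz; exact hymem
      have h2 : ({x, y} : Set α).ncard = 2 := Set.ncard_pair hne
      have := Set.ncard_le_ncard this (Set.toFinite _)
      omega
    · -- a has a third neighbor c at distance k-1
      obtain ⟨k', rfl⟩ : ∃ k', k = k' + 1 := ⟨k - 1, by omega⟩
      obtain ⟨c, hac, hck⟩ := exists_nbr_dist_pred hc hak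
      have hcx : c ≠ x := fun hcx => by subst hcx; omega
      have hcy : c ≠ y := fun hcy => by subst hcy; omega
      have hsub : ({x, y, c} : Set α) ⊆ H.neighborSet a := by
        intro z hz
        rcases hz with hz | hz | hz
        · subst hz; exact hxmem
        · subst hz; exact hymem
        · simp at hz; subst hz; exact hac
      have h3 : ({x, y, c} : Set α).ncard = 3 := by
        rw [Set.ncard_insert_of_notMem (by simp [hne, hcx.symm]) (Set.toFinite _),
            Set.ncard_pair (Ne.symm hcy)]
      have := Set.ncard_le_ncard hsub (Set.toFinite _)
      have := hdeg a
      omega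

/-- Discrete IVT along a walk for the distance function. -/
lemma walk_ivt (hc : H.Connected) (e : α) {x y : α} (w : H.Walk x y) :
    ∀ m : ℕ, H.dist e x ≤ m → m ≤ H.dist e y → ∃ z ∈ w.support, H.dist e z = m := by
  induction w with
  | nil => intro m h1 h2
           exact ⟨_, by simp, le_antisymm h1 h2⟩
  | @cons u u' y hadj w ih =>
    intro m h1 h2
    rcases eq_or_lt_of_le h1 with heq | hlt
    · exact ⟨u, by simp, heq⟩
    · have hle : H.dist e u' ≤ m := by
        have := adj_dist_le hc e hadj
        omega
      obtain ⟨z, hz, hzm⟩ := ih m hle h2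
      exact ⟨z, by simp [hz], hzm⟩

/-- In an acyclic graph, if X induces a connected subgraph and p is a path between two
vertices of X, then p stays in X. -/
lemma path_support_subset (ha : H.IsAcyclic) {X : Set α}
    (hX : (H.induce X).Connected) {x y : α} (hx : x ∈ X) (hy : y ∈ X)
    (p : H.Walk x y) (hp : p.IsPath) : ∀ z ∈ p.support, z ∈ X := by
  obtain ⟨w⟩ := hX.preconnected ⟨x, hx⟩ ⟨y, hy⟩
  have hinj : Function.Injective (SimpleGraph.Embedding.induce X : H.induce X ↪g H) :=
    (SimpleGraph.Embedding.induce X).injective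
  set q := (w.toPath : (H.induce X).Walk ⟨x, hx⟩ ⟨y, hy⟩)
  have hq : ((q.map (SimpleGraph.Embedding.induce X).toHom)).IsPath :=
    SimpleGraph.Walk.map_isPath_of_injective hinj w.toPath.2
  have heq := SimpleGraph.isAcyclic_iff_path_unique.mp ha
    ⟨q.map (SimpleGraph.Embedding.induce X).toHom, hq⟩ ⟨p, hp⟩
  intro z hz
  have : z ∈ (q.map (SimpleGraph.Embedding.induce X).toHom).support := by
    have := congrArg (fun (r : H.Path x y) => r.1.support) heq
    simp only at this
    exact Eq.mpr (congrArg (z ∈ ·) this) hz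
  rw [SimpleGraph.Walk.support_map] at this
  obtain ⟨⟨z', hz'⟩, -, rfl⟩ := List.mem_map.mp this
  exact hz'

/-- Every clique in a finite graph extends to a maximal clique. -/
lemma exists_maxclique_ext {V : Type*} [Fintype V] (G : SimpleGraph V) {s : Set V}
    (hs : G.IsClique s) : ∃ Q : Set V, (G.IsClique Q ∧ ∀ t : Set V, G.IsClique t → Q ⊆ t → Q = t) ∧ s ⊆ Q := by
  obtain ⟨Q, hQmem, hQmax⟩ := Set.Finite.exists_maximalFor id {t : Set V | G.IsClique t ∧ s ⊆ t}
    (Set.toFinite _) ⟨s, hs, subset_rfl⟩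
  refine ⟨Q, ⟨hQmem.1, fun t ht hQt => ?_⟩, hQmem.2⟩
  exact le_antisymm hQt (hQmax ⟨ht, hQmem.2.trans hQt⟩ hQt)

end Helpers

theorem stmt9 [Fintype V] (G : SimpleGraph V) (hG : IsPathGraph G) (v : V) :
    IsIntervalGraph (G.induce (G.neighborSet v)) := by
  classical
  rcases hG with hE | ⟨T, hT, hIP⟩
  · exact (hE.false v).elim
  set P : Set (MaxCliques G) := {Q : MaxCliques G | v ∈ Q.1} with hP
  set H : SimpleGraph ↥P := T.induce P with hH
  letI : Finite (Set V) := inferInstance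
  letI : Fintype ↥P := Fintype.ofFinite _
  have hHc : H.Connected := (hIP v).1
  have hHdeg : ∀ x : ↥P, (H.neighborSet x).ncard ≤ 2 := (hIP v).2
  have hTa : T.IsAcyclic := hT.IsAcyclic
  have hHa : H.IsAcyclic := by
    intro x c hc
    exact hTa (c.map (SimpleGraph.Embedding.induce (G := T) P).toHom)
      ((SimpleGraph.Walk.map_isCycle_iff_of_injective
        (SimpleGraph.Embedding.induce (G := T) P).injective).mpr hc)
  -- P is nonempty
  have hPne : Nonempty ↥P := by
    obtain ⟨Q, hQmax, hQsub⟩ := exists_maxclique_ext G (Set.pairwise_singleton v G.Adj)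
    exact ⟨⟨⟨Q, hQmax⟩, hQsub rfl⟩⟩
  obtain ⟨E, hE⟩ := exists_leaf hHc hHa
  set φ : ↥P → ℕ := H.dist E with hφ
  have hinj : Function.Injective φ := fun x y hxy =>
    dist_from_leaf_inj hHc hHa hHdeg hE (φ x) x y rfl hxy.symm
  -- the index sets
  set I : ↥(G.neighborSet v) → Set ↥P := fun u => {Q : ↥P | u.1 ∈ Q.1.1} with hI
  set S : ↥(G.neighborSet v) → Set ℕ := fun u => φ '' I u with hS
  -- I u is nonempty
  have hIne : ∀ u, (I u).Nonempty := by
    intro u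
    have hcl : G.IsClique {v, u.1} := SimpleGraph.isClique_pair.mpr (fun _ => u.2)
    obtain ⟨Q, hQmax, hQsub⟩ := exists_maxclique_ext G hcl
    refine ⟨⟨⟨Q, hQmax⟩, hQsub (by simp)⟩, ?_⟩
    exact hQsub (by simp)
  have hSne : ∀ u, (S u).Nonempty := fun u => (hIne u).image φ
  have hSbdd : ∀ u, BddAbove (S u) := fun u => (Set.toFinite (S u)).bddAbove
  set m : ↥(G.neighborSet v) → ℕ := fun u => sInf (S u) with hm
  set M : ↥(G.neighborSet v) → ℕ := fun u => sSup (S u) with hM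
  have hmem_le : ∀ u, ∀ i ∈ S u, m u ≤ i ∧ i ≤ M u := fun u i hi =>
    ⟨Nat.sInf_le hi, le_csSup (hSbdd u) hi⟩
  have hmM : ∀ u, m u ≤ M u := by
    intro u
    obtain ⟨i, hi⟩ := hSne u
    obtain ⟨h1, h2⟩ := hmem_le u i hi
    omega
  -- interval property
  have hiv : ∀ u, ∀ i : ℕ, m u ≤ i → i ≤ M u → i ∈ S u := by
    intro u i h1 h2
    obtain ⟨Q1, hQ1I, hQ1⟩ := Nat.sInf_mem (hSne u)
    obtain ⟨Q3, hQ3I, hQ3⟩ := Nat.sSup_mem (hSne u) (hSbdd u)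
    -- a path in H from Q1 to Q3
    obtain ⟨w⟩ := hHc.preconnected Q1 Q3
    set p := w.toPath with hp
    -- all of p's support lies in I u
    have hsupp : ∀ R ∈ p.1.support, R ∈ I u := by
      have hXc : (T.induce {Q : MaxCliques G | u.1 ∈ Q.1}).Connected := (hIP u.1).1
      have hmp : (p.1.map (SimpleGraph.Embedding.induce (G := T) P).toHom).IsPath :=
        SimpleGraph.Walk.map_isPath_of_injective
          (SimpleGraph.Embedding.induce (G := T) P).injective p.2
      have := path_support_subset hTa hXc (X := {Q : MaxCliques G | u.1 ∈ Q.1})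
        hQ1I hQ3I (p.1.map (SimpleGraph.Embedding.induce (G := T) P).toHom) hmp
      intro R hR
      have hRmem : (R : MaxCliques G) ∈
          (p.1.map (SimpleGraph.Embedding.induce (G := T) P).toHom).support := by
        rw [SimpleGraph.Walk.support_map]
        exact List.mem_map_of_mem hR
      exact this _ hRmem
    obtain ⟨z, hz, hzi⟩ := walk_ivt hHc E p.1 i (hQ1.trans_le h1) (h2.trans_eq hQ3.symm)
    exact ⟨z, hsupp z hz, hzi⟩
  -- common clique iff adjacent
  have hadj_of : ∀ u w : ↥(G.neighborSet v), u.1 ≠ w.1 → ∀ Q : ↥P,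
      Q ∈ I u → Q ∈ I w → G.Adj u.1 w.1 := by
    intro u w hne Q hu hw
    exact Q.1.2.1 hu hw hne
  have hof_adj : ∀ u w : ↥(G.neighborSet v), G.Adj u.1 w.1 →
      ∃ Q : ↥P, Q ∈ I u ∧ Q ∈ I w := by
    intro u w hadj
    have hcl : G.IsClique {v, u.1, w.1} := by
      rw [SimpleGraph.isClique_insert]
      refine ⟨SimpleGraph.isClique_pair.mpr (fun _ => hadj), ?_⟩
      rintro b (rfl | hb)
      · exact fun _ => u.2
      · simp only [Set.mem_singleton_iff] at hb; subst hb; exact fun _ => w.2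
    obtain ⟨Q, hQmax, hQsub⟩ := exists_maxclique_ext G hcl
    exact ⟨⟨⟨Q, hQmax⟩, hQsub (by simp)⟩, hQsub (by simp), hQsub (by simp)⟩
  -- the interval model
  refine ⟨fun u => Set.Icc (m u : ℝ) (M u), fun u => ⟨m u, M u, by exact_mod_cast hmM u, rfl⟩, ?_⟩
  intro u w hne
  have hne' : u.1 ≠ w.1 := fun h => hne (Subtype.ext h)
  constructor
  · intro hadj
    have hadj' : G.Adj u.1 w.1 := hadj
    obtain ⟨Q, hu, hw⟩ := hof_adj u w hadj'
    have h1 := hmem_le u (φ Q) ⟨Q, hu, rfl⟩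
    have h2 := hmem_le w (φ Q) ⟨Q, hw, rfl⟩
    exact ⟨(φ Q : ℝ), ⟨by exact_mod_cast h1.1, by exact_mod_cast h1.2⟩,
      ⟨by exact_mod_cast h2.1, by exact_mod_cast h2.2⟩⟩
  · rintro ⟨r, ⟨hr1, hr2⟩, ⟨hr3, hr4⟩⟩
    have hmuMw : m u ≤ M w := by exact_mod_cast hr1.trans hr4
    have hmwMu : m w ≤ M u := by exact_mod_cast hr3.trans hr2
    set i := max (m u) (m w) with hi
    have hiu : i ∈ S u := hiv u i (le_max_left _ _)
      (max_le (hmM u) hmwMu)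
    have hiw : i ∈ S w := hiv w i (le_max_right _ _)
      (max_le hmuMw (hmM w))
    obtain ⟨Q, hQ, hQi⟩ := hiu
    obtain ⟨Q', hQ', hQi'⟩ := hiw
    have : Q = Q' := hinj (hQi.trans hQi'.symm)
    subst this
    exact hadj_of u w hne' Q hQ hQ'
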